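/- Let b = 1/(2cos(4π/9)). Then b is a Pisot number with minimal polynomial x³ - 3x² + 1, and γ = b² is a Pisot unit with minimal polynomial x³ - 9x² + 6x - 1. -/

import Mathlib

open Polynomial in
lemma aux_irred_one : Irreducible (X^3 - 3*X^2 + 1 : ℚ[X]) := by
  have h2 : Irreducible (X^3 - 3*X^2 + 1 : (ZMod 2)[X]) := by
    have hdeg : (X^3 - 3*X^2 + 1 : (ZMod 2)[X]).natDegree = 3 := by compute_degree!
    rw [irreducible_iff_roots_eq_zero_of_degree_le_three (by rw [hdeg]; norm_num) (by rw [hdeg])]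
    rw [Multiset.eq_zero_iff_forall_notMem]
    intro a ha
    rw [mem_roots', IsRoot] at ha
    have h2 := ha.2
    simp only [eval_add, eval_sub, eval_pow, eval_mul, eval_X, eval_one, eval_ofNat] at h2
    have hcase : a = 0 ∨ a = 1 := by
      have h := ZMod.val_lt a
      interval_cases h' : a.val
      · left
        have := congrArg (Nat.cast (R := ZMod 2)) h'
        rwa [ZMod.natCast_val, ZMod.cast_id] at this
      · right
        have := congrArg (Nat.cast (R := ZMod 2)) h'
        rwa [ZMod.natCast_val, ZMod.cast_id] at this
    rcases hcase with rfl | rfl <;> revert h2 <;> decide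
  have hmZ : (X^3 - 3*X^2 + 1 : ℤ[X]).Monic := by monicity!
  have hZ : Irreducible (X^3 - 3*X^2 + 1 : ℤ[X]) := by
    apply hmZ.irreducible_of_irreducible_map (Int.castRingHom (ZMod 2))
    convert h2 using 1
    simp
  have := (hmZ.irreducible_iff_irreducible_map_fraction_map (K := ℚ)).mp hZ
  convert this using 1
  simp

open Polynomial in
lemma aux_irred_two : Irreducible (X^3 - 9*X^2 + 6*X - 1 : ℚ[X]) := by
  have h2 : Irreducible (X^3 - 9*X^2 + 6*X - 1 : (ZMod 2)[X]) := by
    have hdeg : (X^3 - 9*X^2 + 6*X - 1 : (ZMod 2)[X]).natDegree = 3 := by compute_degree!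
    rw [irreducible_iff_roots_eq_zero_of_degree_le_three (by rw [hdeg]; norm_num) (by rw [hdeg])]
    rw [Multiset.eq_zero_iff_forall_notMem]
    intro a ha
    rw [mem_roots', IsRoot] at ha
    have h2 := ha.2
    simp only [eval_add, eval_sub, eval_pow, eval_mul, eval_X, eval_one, eval_ofNat] at h2
    have hcase : a = 0 ∨ a = 1 := by
      have h := ZMod.val_lt a
      interval_cases h' : a.val
      · left
        have := congrArg (Nat.cast (R := ZMod 2)) h'
        rwa [ZMod.natCast_val, ZMod.cast_id] at this
      · right
        have := congrArg (Nat.cast (R := ZMod 2)) h'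
        rwa [ZMod.natCast_val, ZMod.cast_id] at this
    rcases hcase with rfl | rfl <;> revert h2 <;> decide
  have hmZ : (X^3 - 9*X^2 + 6*X - 1 : ℤ[X]).Monic := by monicity!
  have hZ : Irreducible (X^3 - 9*X^2 + 6*X - 1 : ℤ[X]) := by
    apply hmZ.irreducible_of_irreducible_map (Int.castRingHom (ZMod 2))
    convert h2 using 1
    simp
  have := (hmZ.irreducible_iff_irreducible_map_fraction_map (K := ℚ)).mp hZ
  convert this using 1
  simp

set_option maxHeartbeats 1000000 in
open Polynomial in
/-- b = 1/(2cos(4π/9)) is a Pisot number with minimal polynomial x³-3x²+1 and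
γ = b² is a Pisot unit with minimal polynomial x³-9x²+6x-1. -/
theorem nine_fold_scaling_pisot (b : ℝ) (hb : b = 1 / (2 * Real.cos (4 * Real.pi / 9))) :
    IsIntegral ℤ b ∧ 1 < b ∧
    minpoly ℚ b = X ^ 3 - 3 * X ^ 2 + 1 ∧
    (∀ z : ℂ, z ^ 3 - 3 * z ^ 2 + 1 = 0 → z ≠ (b : ℂ) → ‖z‖ < 1) ∧
    IsIntegral ℤ (b ^ 2) ∧ 1 < b ^ 2 ∧
    minpoly ℚ (b ^ 2) = X ^ 3 - 9 * X ^ 2 + 6 * X - 1 ∧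
    (∀ z : ℂ, z ^ 3 - 9 * z ^ 2 + 6 * z - 1 = 0 → z ≠ ((b : ℂ)) ^ 2 → ‖z‖ < 1) ∧
    (∃ u : ℝ, IsIntegral ℤ u ∧ b ^ 2 * u = 1) := by
  -- basic trig facts
  have hpi := Real.pi_pos
  have hc0 : 0 < Real.cos (4 * Real.pi / 9) :=
    Real.cos_pos_of_mem_Ioo ⟨by nlinarith, by nlinarith⟩
  set c := Real.cos (4 * Real.pi / 9) with hc
  have htrip : Real.cos (3 * (4 * Real.pi / 9)) = 4 * c ^ 3 - 3 * c := Real.cos_three_mul _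
  have h43 : (3 : ℝ) * (4 * Real.pi / 9) = Real.pi - (-(Real.pi / 3)) := by ring
  rw [h43, Real.cos_pi_sub, Real.cos_neg, Real.cos_pi_div_three] at htrip
  have hchalf : c < 1 / 2 := by
    have := Real.cos_lt_cos_of_nonneg_of_le_pi (x := Real.pi / 3) (y := 4 * Real.pi / 9)
      (by positivity) (by nlinarith) (by nlinarith)
    rwa [Real.cos_pi_div_three] at this
  -- the cubic relation and 1 < b
  have pb : b ^ 3 - 3 * b ^ 2 + 1 = 0 := by
    rw [hb]; field_simp; nlinarith [htrip]
  have h1b : 1 < b := by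
    rw [hb, lt_div_iff₀ (by positivity)]; nlinarith
  -- numeric bounds on b
  have hlb : 2.87 < b := by
    nlinarith [sq_nonneg (b - 2), sq_nonneg (b - 1), sq_nonneg b, sq_nonneg (b - 2.87),
      sq_nonneg (b + 1)]
  have hub : b < 2.9 := by
    nlinarith [sq_nonneg (b - 2.9), sq_nonneg (b - 2), sq_nonneg (b + 1)]
  -- complex roots of the first cubic
  have habs1 : ∀ z : ℂ, z ^ 3 - 3 * z ^ 2 + 1 = 0 → z ≠ (b : ℂ) → ‖z‖ < 1 := by
    intro z hz hne
    have hD : (0:ℝ) ≤ -3*b^2 + 6*b + 9 := by nlinarith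
    set s := Real.sqrt (-3*b^2 + 6*b + 9) with hsdef
    have hs0 : 0 ≤ s := Real.sqrt_nonneg _
    have hs2 : s ^ 2 = -3*b^2 + 6*b + 9 := Real.sq_sqrt hD
    have hslb : 1.08 < s := by nlinarith
    have hsub : s < 1.23 := by nlinarith
    have pbC : (b:ℂ) ^ 3 - 3 * (b:ℂ) ^ 2 + 1 = 0 := by exact_mod_cast pb
    have hs2C : (s:ℂ) ^ 2 = -3*(b:ℂ)^2 + 6*(b:ℂ) + 9 := by exact_mod_cast hs2
    have key : (z - (b:ℂ)) * ((z - (((3 - b + s)/2 : ℝ) : ℂ)) * (z - (((3 - b - s)/2 : ℝ) : ℂ)))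
        = z ^ 3 - 3 * z ^ 2 + 1 := by
      push_cast
      linear_combination (-(z - (b:ℂ))/4) * hs2C - pbC
    rw [hz] at key
    rcases mul_eq_zero.mp key with h | h
    · exact absurd (sub_eq_zero.mp h) hne
    rcases mul_eq_zero.mp h with h | h <;> rw [sub_eq_zero] at h <;>
      rw [h, Complex.norm_real, Real.norm_eq_abs, abs_lt] <;> constructor <;> nlinarith
  -- complex roots of the second cubic
  have habs2 : ∀ w : ℂ, w ^ 3 - 9 * w ^ 2 + 6 * w - 1 = 0 → w ≠ ((b : ℂ)) ^ 2 →
      ‖w‖ < 1 := by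
    intro w hw hne
    obtain ⟨z, hzw⟩ : ∃ z : ℂ, z ^ 2 = w := IsAlgClosed.exists_pow_nat_eq w zero_lt_two
    have hfac : (z ^ 3 - 3 * z ^ 2 + 1) * ((-z) ^ 3 - 3 * (-z) ^ 2 + 1) = 0 := by
      linear_combination -hw + (-(z^4) + 9*z^2 - 6 - w^2 - w*z^2 + 9*w) * hzw
    have habsw : ‖w‖ = ‖z‖ ^ 2 := by rw [← hzw, norm_pow]
    rcases mul_eq_zero.mp hfac with h | h
    · have hz : z ≠ (b:ℂ) := by rintro rfl; exact hne (by rw [← hzw])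
      have := habs1 z h hz
      rw [habsw]
      exact pow_lt_one₀ (norm_nonneg z) this two_ne_zero
    · have hz : -z ≠ (b:ℂ) := by
        rintro hzz
        exact hne (by rw [← hzw, ← neg_neg z, hzz]; ring)
      have := habs1 (-z) h hz
      rw [habsw, ← norm_neg z]
      exact pow_lt_one₀ (norm_nonneg (-z)) this two_ne_zero
  -- integrality
  have hbi : IsIntegral ℤ b := by
    refine ⟨X^3 - 3*X^2 + 1, by monicity!, ?_⟩
    simp only [eval₂_add, eval₂_sub, eval₂_pow, eval₂_mul, eval₂_X, eval₂_ofNat, eval₂_one]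
    linear_combination pb
  refine ⟨hbi, h1b, ?_, habs1, hbi.pow 2, by nlinarith, ?_, habs2, ?_⟩
  · symm; apply minpoly.eq_of_irreducible_of_monic aux_irred_one
    · simp only [map_add, map_sub, map_pow, map_mul, aeval_X, map_ofNat, map_one]
      linear_combination pb
    · monicity!
  · symm; apply minpoly.eq_of_irreducible_of_monic aux_irred_two
    · simp only [map_add, map_sub, map_pow, map_mul, aeval_X, map_ofNat, map_one]
      linear_combination (b^3 + 3*b^2 - 1) * pb
    · monicity!
  · refine ⟨b^4 - 9*b^2 + 6, ?_, by linear_combination (b^3 + 3*b^2 - 1) * pb⟩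
    have h9 : IsIntegral ℤ (9:ℝ) := by
      simpa using isIntegral_algebraMap (A := ℝ) (x := (9:ℤ))
    have h6 : IsIntegral ℤ (6:ℝ) := by
      simpa using isIntegral_algebraMap (A := ℝ) (x := (6:ℤ))
    exact ((hbi.pow 4).sub (h9.mul (hbi.pow 2))).add h6
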